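/- Let r₁, r₂, r₃ > 0 with r₁² + r₂² + r₃² = 1. Set V = 8π²r₁²/(r₂²+r₃²) + (1/4)(β_x² + β_y²), where β_x = 2π(1−3r₁²)/(r₂²+r₃²) and β_y = −2π r₁(r₂²−r₃²)/(r₂r₃(r₂²+r₃²)) are constants. Then V = π²(1−r₂²)(r₁²+r₂²)/(r₂²r₃²), and the energy of the homogeneous torus, E(Σ_{r₁,r₂,r₃}) = (1/2)·V·(r₂²+r₃²)·r₂r₃/r₁ (one half the potential times the area of the fundamental domain spanned by e₁ = (r₂²+r₃²,0) and e₂ = (r₃², r₂r₃/r₁)), equals π²(1−r₁²)(1−r₂²)(1−r₃²)/(2r₁r₂r₃). -/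

import Mathlib

open Real

/-- The constant Schrödinger potential `V = 8π²r₁²/(r₂²+r₃²) + (1/4)(β_x²+β_y²)` of the
homogeneous torus `Σ_{r₁,r₂,r₃}` equals `π²(1−r₂²)(r₁²+r₂²)/(r₂²r₃²)`, and the energy
`E = (1/2)·V·(area of the fundamental domain)` equals
`π²(1−r₁²)(1−r₂²)(1−r₃²)/(2r₁r₂r₃)`. -/
theorem energy_of_homogeneous_torus
    (r1 r2 r3 : ℝ) (h1 : 0 < r1) (h2 : 0 < r2) (h3 : 0 < r3)
    (hsum : r1^2 + r2^2 + r3^2 = 1)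
    (βx βy V : ℝ)
    (hβx : βx = 2 * π * (1 - 3 * r1^2) / (r2^2 + r3^2))
    (hβy : βy = -(2 * π * r1 * (r2^2 - r3^2)) / (r2 * r3 * (r2^2 + r3^2)))
    (hV : V = 8 * π^2 * r1^2 / (r2^2 + r3^2) + (1/4) * (βx^2 + βy^2)) :
    V = π^2 * (1 - r2^2) * (r1^2 + r2^2) / (r2^2 * r3^2) ∧
    (1/2) * V * ((r2^2 + r3^2) * (r2 * r3 / r1)) =
      π^2 * (1 - r1^2) * (1 - r2^2) * (1 - r3^2) / (2 * r1 * r2 * r3) := by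
  have hs : r2^2 + r3^2 = 1 - r1^2 := by linarith
  have hne1 : r1 ≠ 0 := h1.ne'
  have hne2 : r2 ≠ 0 := h2.ne'
  have hne3 : r3 ≠ 0 := h3.ne'
  have hs0 : r2^2 + r3^2 ≠ 0 := by positivity
  have h12 : (1:ℝ) - r1^2 ≠ 0 := by rw [← hs]; exact hs0
  have h22 : (1:ℝ) - r2^2 = r1^2 + r3^2 := by linarith
  have h32 : (1:ℝ) - r3^2 = r1^2 + r2^2 := by linarith
  have hr1 : r1^2 = 1 - r2^2 - r3^2 := by linarith
  have hVval : V = π^2 * (1 - r2^2) * (r1^2 + r2^2) / (r2^2 * r3^2) := by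
    subst hβx hβy hV
    field_simp
    linear_combination (4 * (9*r2^2*r3^2*(r1^2 + 1 - r2^2 - r3^2) + 8*r2^2*r3^2*(r2^2+r3^2) - 6*r2^2*r3^2 + (r2^2-r3^2)^2 - (r2^2+r3^2)^2*(1-r2^2))) * hsum
  refine ⟨hVval, ?_⟩
  rw [hVval, hs, h22, h32]
  field_simp
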